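/- Let d ≥ 1, let G, D, β > 0, let 𝒟 ⊆ ℝ^d be a convex set of diameter at most D, let f_1,…,f_T : ℝ^d → ℝ be differentiable, let x_t, x* ∈ 𝒟, set g_t = ∇f_t(x_t) with ‖g_t‖ ≤ G, and suppose for each t: f_t(x*) ≥ f_t(x_t) + ⟨g_t, x* − x_t⟩ + (β/2)⟨g_t, x* − x_t⟩². Let B ≥ 0 and set V = Σ_{t=1}^T ⟨g_t, x_t − x*⟩². If Σ_{t=1}^T ⟨g_t, x_t − x*⟩ ≤ 3√(V·B) + 10GD·B, then Σ_{t=1}^T f_t(x_t) − Σ_{t=1}^T f_t(x*) ≤ (10GD + 9/(2β)) B. -/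

import Mathlib

theorem maler_expConcave_corollary
    (d T : ℕ) (hd : 1 ≤ d)
    (G D β : ℝ) (hG : 0 < G) (hD : 0 < D) (hβ : 0 < β)
    (𝒟 : Set (EuclideanSpace ℝ (Fin d))) (hconv : Convex ℝ 𝒟)
    (hdiam : ∀ a ∈ 𝒟, ∀ b ∈ 𝒟, ‖a - b‖ ≤ D)
    (f : ℕ → EuclideanSpace ℝ (Fin d) → ℝ)
    (x : ℕ → EuclideanSpace ℝ (Fin d)) (xstar : EuclideanSpace ℝ (Fin d))
    (hx : ∀ t ∈ Finset.Icc 1 T, x t ∈ 𝒟) (hxstar : xstar ∈ 𝒟)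
    (g : ℕ → EuclideanSpace ℝ (Fin d))
    (hgrad : ∀ t ∈ Finset.Icc 1 T, HasGradientAt (f t) (g t) (x t))
    (hg : ∀ t ∈ Finset.Icc 1 T, ‖g t‖ ≤ G)
    (hquad : ∀ t ∈ Finset.Icc 1 T,
      f t xstar ≥ f t (x t) + (inner ℝ (g t) (xstar - x t) : ℝ)
        + (β / 2) * (inner ℝ (g t) (xstar - x t) : ℝ)^2)
    (B V : ℝ) (hB : 0 ≤ B)
    (hV : V = ∑ t ∈ Finset.Icc 1 T, (inner ℝ (g t) (x t - xstar) : ℝ)^2)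
    (hbound : (∑ t ∈ Finset.Icc 1 T, (inner ℝ (g t) (x t - xstar) : ℝ))
        ≤ 3 * Real.sqrt (V * B) + 10 * G * D * B) :
    (∑ t ∈ Finset.Icc 1 T, f t (x t)) - (∑ t ∈ Finset.Icc 1 T, f t xstar)
      ≤ (10 * G * D + 9 / (2 * β)) * B := by
  have hstep : ∀ t ∈ Finset.Icc 1 T,
      f t (x t) - f t xstar ≤ (inner ℝ (g t) (x t - xstar) : ℝ)
        - (β / 2) * (inner ℝ (g t) (x t - xstar) : ℝ)^2 := by
    intro t ht
    have h := hquad t ht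
    have hneg : (inner ℝ (g t) (xstar - x t) : ℝ)
        = -(inner ℝ (g t) (x t - xstar) : ℝ) := by
      rw [← neg_sub, inner_neg_right]
    rw [hneg] at h
    nlinarith [h]
  have hV0 : 0 ≤ V := by
    rw [hV]; exact Finset.sum_nonneg fun t _ => sq_nonneg _
  -- sum up
  have hsum : (∑ t ∈ Finset.Icc 1 T, f t (x t)) - (∑ t ∈ Finset.Icc 1 T, f t xstar)
      ≤ (∑ t ∈ Finset.Icc 1 T, (inner ℝ (g t) (x t - xstar) : ℝ)) - (β / 2) * V := by
    rw [hV, Finset.mul_sum, ← Finset.sum_sub_distrib, ← Finset.sum_sub_distrib]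
    exact Finset.sum_le_sum hstep
  -- AM-GM
  have hs : Real.sqrt (V * B) ^ 2 = V * B := Real.sq_sqrt (mul_nonneg hV0 hB)
  have hsV : Real.sqrt V ^ 2 = V := Real.sq_sqrt hV0
  have hsB : Real.sqrt B ^ 2 = B := Real.sq_sqrt hB
  have hmul : Real.sqrt (V * B) = Real.sqrt V * Real.sqrt B := Real.sqrt_mul hV0 B
  have hamgm : 3 * Real.sqrt (V * B) ≤ (β / 2) * V + (9 / (2 * β)) * B := by
    rw [hmul]
    have key : 0 ≤ (β * Real.sqrt V - 3 * Real.sqrt B)^2 := sq_nonneg _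
    have hβ' : 0 < 2 * β := by linarith
    rw [← sub_nonneg]
    have : (β / 2) * V + (9 / (2 * β)) * B - 3 * (Real.sqrt V * Real.sqrt B)
        = (β * Real.sqrt V - 3 * Real.sqrt B)^2 / (2 * β) := by
      field_simp
      linear_combination (-β^2) * hsV + (-9) * hsB
    rw [this]
    positivity
  calc (∑ t ∈ Finset.Icc 1 T, f t (x t)) - (∑ t ∈ Finset.Icc 1 T, f t xstar)
      ≤ (∑ t ∈ Finset.Icc 1 T, (inner ℝ (g t) (x t - xstar) : ℝ)) - (β / 2) * V := hsum
    _ ≤ 3 * Real.sqrt (V * B) + 10 * G * D * B - (β / 2) * V := by linarith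
    _ ≤ (10 * G * D + 9 / (2 * β)) * B := by nlinarith [hamgm]
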